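/- For every integer m ≥ 2, there does not exist a cyclic ordering of the 2m² + m edges of the complete graph K_{2m+1} in which every m cyclically consecutive edges are pairwise disjoint; consequently cms(K_{2m+1}) ≤ m - 1. -/

import Mathlib

/-- Two edges of a graph (as unordered pairs of vertices) are *disjoint*
if they share no vertex. -/
def edgesDisjoint {V : Type*} (e₁ e₂ : Sym2 V) : Prop :=
  ∀ v : V, v ∈ e₁ → v ∉ e₂

/-- The number of edges of a graph `G`. -/
noncomputable def edgeCount {V : Type*} (G : SimpleGraph V) : ℕ :=
  Nat.card G.edgeSet

/-- A linear ordering `f` of the edges of `G` has matching number at least `d`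
if every `d` consecutive edges in the ordering are pairwise disjoint. -/
def LinearGood {V : Type*} (G : SimpleGraph V)
    (f : Fin (edgeCount G) ≃ G.edgeSet) (d : ℕ) : Prop :=
  ∀ j k : Fin (edgeCount G), j ≠ k → (j : ℕ) < (k : ℕ) + d → (k : ℕ) < (j : ℕ) + d →
    edgesDisjoint (f j : Sym2 V) (f k : Sym2 V)

/-- The matching sequencibility `ms G`: the largest `d` (necessarily at most the
number of edges) for which some linear ordering of the edges of `G` has every
`d` consecutive edges forming a matching. -/
noncomputable def ms {V : Type*} (G : SimpleGraph V) : ℕ :=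
  sSup {d : ℕ | d ≤ edgeCount G ∧ ∃ f : Fin (edgeCount G) ≃ G.edgeSet, LinearGood G f d}

/-- A cyclic ordering `f : ZMod N ≃ edges of G` has cyclic matching number at least `d`
if every `d` cyclically consecutive edges in the ordering are pairwise disjoint. -/
def CyclicGood {V : Type*} (G : SimpleGraph V) {N : ℕ}
    (f : ZMod N ≃ G.edgeSet) (d : ℕ) : Prop :=
  ∀ (i : ZMod N) (j k : ℕ), j < d → k < d → j ≠ k →
    edgesDisjoint (f (i + (j : ZMod N)) : Sym2 V) (f (i + (k : ZMod N)) : Sym2 V)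

/-- The cyclic matching sequencibility `cms G`: the largest `d` for which some
cyclic ordering of the edges of `G` has every `d` cyclically consecutive edges
forming a matching. -/
noncomputable def cms {V : Type*} (G : SimpleGraph V) : ℕ :=
  sSup {d : ℕ | ∃ f : ZMod (edgeCount G) ≃ G.edgeSet, CyclicGood G f d}

namespace CMSOddAux

open Classical in
/-- The "next-occurrence walk" of vertex `v` from position `q`: cumulative offsets,
each step is `m` if `v` occurs `m` later, else `m+1`. -/
noncomputable def wkO {n N : ℕ} (m : ℕ) (E : ZMod N → Sym2 (Fin n)) (v : Fin n) (q : ZMod N) :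
    ℕ → ℕ
  | 0 => 0
  | k+1 =>
    wkO m E v q k +
      (if v ∈ E (q + ((wkO m E v q k + m : ℕ) : ZMod N)) then m else m + 1)

section Aux

variable {m N : ℕ} {E : ZMod N → Sym2 (Fin (2*m+1))}

theorem castNeZero (hm : 2 ≤ m) (hN : N = 2*m^2 + m) {δ : ℕ} (h1 : 0 < δ) (h2 : δ < N) :
    (δ : ZMod N) ≠ 0 := by
  rw [Ne, ZMod.natCast_eq_zero_iff]
  intro hdvd
  exact absurd (Nat.le_of_dvd h1 hdvd) (by omega)

theorem castInjNat (hm : 2 ≤ m) (hN : N = 2*m^2 + m) {a b : ℕ} (ha : a < N) (hb : b < N)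
    (h : (a : ZMod N) = b) : a = b := by
  haveI : NeZero N := ⟨by omega⟩
  have := congrArg ZMod.val h
  rwa [ZMod.val_cast_of_lt ha, ZMod.val_cast_of_lt hb] at this

theorem pairEq {v w : Fin (2*m+1)} (hvw : v ≠ w) {e e' : Sym2 (Fin (2*m+1))}
    (h1 : v ∈ e) (h2 : w ∈ e) (h3 : v ∈ e') (h4 : w ∈ e') : e = e' := by
  rw [(Sym2.mem_and_mem_iff hvw).mp ⟨h1, h2⟩, (Sym2.mem_and_mem_iff hvw).mp ⟨h3, h4⟩]

theorem partner_ne (hdiag : ∀ p, ¬ (E p).IsDiag) {v : Fin (2*m+1)} {p : ZMod N}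
    (h : v ∈ E p) : v ≠ Sym2.Mem.other' h := by
  intro heq
  apply hdiag p
  rw [← Sym2.other_spec' h, ← heq]
  exact Sym2.mk_isDiag_iff.mpr rfl

theorem edge_two (hdiag : ∀ p, ¬ (E p).IsDiag) (p : ZMod N) :
    ∃ a b : Fin (2*m+1), a ≠ b ∧ E p = s(a, b) := by
  have h := hdiag p
  obtain ⟨⟨a, b⟩, hE⟩ := Quot.exists_rep (E p)
  refine ⟨a, b, fun hab => ?_, hE.symm⟩
  rw [← hE] at h
  exact h (Sym2.mk_isDiag_iff.mpr hab)

/-- the `m+1` edges `E q, …, E (q+m)` cover every vertex. -/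
theorem cover (hm : 2 ≤ m) (hN : N = 2*m^2 + m)
    (hW : ∀ (p : ZMod N) (δ : ℕ), 0 < δ → δ < m → ∀ x : Fin (2*m+1), x ∈ E p → x ∉ E (p + (δ : ZMod N)))
    (hinj : Function.Injective E) (hdiag : ∀ p, ¬ (E p).IsDiag)
    (q : ZMod N) (v : Fin (2*m+1)) : ∃ j : ℕ, j ≤ m ∧ v ∈ E (q + (j : ZMod N)) := by
  by_contra hcon
  push_neg at hcon
  classical
  set eF : Sym2 (Fin (2*m+1)) → Finset (Fin (2*m+1)) :=
    fun e => Finset.univ.filter (· ∈ e) with heF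
  have heF_mem : ∀ (e : Sym2 (Fin (2*m+1))) x, x ∈ eF e ↔ x ∈ e := by
    intro e x; simp [heF]
  have heF_card : ∀ p : ZMod N, (eF (E p)).card = 2 := by
    intro p
    obtain ⟨a, b, hab, hE⟩ := edge_two hdiag p
    have : eF (E p) = {a, b} := by
      ext x
      rw [heF_mem, hE, Sym2.mem_iff, Finset.mem_insert, Finset.mem_singleton]
    rw [this, Finset.card_insert_of_notMem (by simpa using hab), Finset.card_singleton]
  -- the union of edges at distance 1..m from q
  set T : Finset (Fin (2*m+1)) :=
    (Finset.range m).biUnion (fun i => eF (E (q + ((1+i : ℕ) : ZMod N)))) with hT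
  have hTcard : T.card = 2*m := by
    rw [hT, Finset.card_biUnion, Finset.sum_congr rfl (fun i _ => heF_card _),
      Finset.sum_const, Finset.card_range, smul_eq_mul]
    · ring
    · -- pairwise disjoint
      intro i hi j hj hij
      rw [Finset.mem_coe, Finset.mem_range] at hi hj
      simp only [Function.onFun]
      rw [Finset.disjoint_left]
      intro x hxi hxj
      rw [heF_mem] at hxi hxj
      rcases Nat.lt_or_ge i j with h | h
      · have harith : (q + ((1+i : ℕ) : ZMod N)) + ((j - i : ℕ) : ZMod N)
            = q + ((1+j : ℕ) : ZMod N) := by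
          rw [add_assoc, ← Nat.cast_add]
          congr 2
          omega
        exact hW (q + ((1+i : ℕ) : ZMod N)) (j - i) (by omega) (by omega) x hxi
          (harith ▸ hxj)
      · have hij' : j < i := by omega
        have harith : (q + ((1+j : ℕ) : ZMod N)) + ((i - j : ℕ) : ZMod N)
            = q + ((1+i : ℕ) : ZMod N) := by
          rw [add_assoc, ← Nat.cast_add]
          congr 2
          omega
        exact hW (q + ((1+j : ℕ) : ZMod N)) (i - j) (by omega) (by omega) x hxj
          (harith ▸ hxi)
  have hTsub : T ⊆ Finset.univ.erase v := by
    intro x hx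
    rw [hT, Finset.mem_biUnion] at hx
    obtain ⟨i, hi, hxi⟩ := hx
    rw [heF_mem] at hxi
    rw [Finset.mem_range] at hi
    refine Finset.mem_erase.mpr ⟨fun hxv => ?_, Finset.mem_univ x⟩
    exact hcon (1+i) (by omega) (hxv ▸ hxi)
  have hecard : (Finset.univ.erase v).card = 2*m := by
    rw [Finset.card_erase_of_mem (Finset.mem_univ v), Finset.card_univ, Fintype.card_fin]
    omega
  have hTeq : T = Finset.univ.erase v :=
    Finset.eq_of_subset_of_card_le hTsub (by omega)
  -- endpoints of E q must both be in E (q + m)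
  obtain ⟨a, b, hab, hEq⟩ := edge_two hdiag q
  have hvq : v ∉ E q := by
    have := hcon 0 (by omega)
    simpa using this
  have hmem_qm : ∀ x : Fin (2*m+1), x ∈ E q → x ∈ E (q + ((m : ℕ) : ZMod N)) := by
    intro x hx
    have hxv : x ≠ v := fun h => hvq (h ▸ hx)
    have hxT : x ∈ T := hTeq ▸ Finset.mem_erase.mpr ⟨hxv, Finset.mem_univ x⟩
    rw [hT, Finset.mem_biUnion] at hxT
    obtain ⟨i, hi, hxi⟩ := hxT
    rw [Finset.mem_range] at hi
    rw [heF_mem] at hxi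
    rcases Nat.lt_or_ge (1+i) m with h | h
    · exact absurd hxi (hW q (1+i) (by omega) h x hx)
    · have : 1 + i = m := by omega
      rwa [this] at hxi
  have hEqm : E (q + ((m : ℕ) : ZMod N)) = E q := by
    refine pairEq hab ?_ ?_ ?_ ?_
    · exact hmem_qm a (hEq ▸ Sym2.mem_mk_left a b)
    · exact hmem_qm b (hEq ▸ Sym2.mem_mk_right a b)
    · exact hEq ▸ Sym2.mem_mk_left a b
    · exact hEq ▸ Sym2.mem_mk_right a b
  have := hinj hEqm
  have hm0 : ((m : ℕ) : ZMod N) = 0 := by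
    have h' := congrArg (fun z => z - q) this
    simpa [add_comm, add_sub_cancel_right] using h'
  exact castNeZero hm hN (by omega) (by nlinarith) hm0

theorem nxt (hm : 2 ≤ m) (hN : N = 2*m^2 + m)
    (hW : ∀ (p : ZMod N) (δ : ℕ), 0 < δ → δ < m → ∀ x : Fin (2*m+1), x ∈ E p → x ∉ E (p + (δ : ZMod N)))
    (hinj : Function.Injective E) (hdiag : ∀ p, ¬ (E p).IsDiag)
    {v : Fin (2*m+1)} {r : ZMod N} (hA : v ∈ E r) :
    v ∈ E (r + ((m : ℕ) : ZMod N)) ∨ v ∈ E (r + ((m+1 : ℕ) : ZMod N)) := by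
  obtain ⟨j, hj, hmem⟩ := cover hm hN hW hinj hdiag (r + ((1:ℕ) : ZMod N)) v
  have harith : r + ((1:ℕ) : ZMod N) + (j : ZMod N) = r + ((1+j : ℕ) : ZMod N) := by
    push_cast; ring
  rw [harith] at hmem
  rcases Nat.lt_or_ge (1+j) m with h | h
  · exact absurd hmem (hW r (1+j) (by omega) h v hA)
  · rcases Nat.lt_or_ge j m with h' | h'
    · left; have : 1 + j = m := by omega
      rwa [this] at hmem
    · right; have : 1 + j = m + 1 := by omega
      rwa [this] at hmem

theorem prev (hm : 2 ≤ m) (hN : N = 2*m^2 + m)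
    (hW : ∀ (p : ZMod N) (δ : ℕ), 0 < δ → δ < m → ∀ x : Fin (2*m+1), x ∈ E p → x ∉ E (p + (δ : ZMod N)))
    (hinj : Function.Injective E) (hdiag : ∀ p, ¬ (E p).IsDiag)
    {v : Fin (2*m+1)} {r : ZMod N} (hA : v ∈ E r) :
    v ∈ E (r - ((m : ℕ) : ZMod N)) ∨ v ∈ E (r - ((m+1 : ℕ) : ZMod N)) := by
  obtain ⟨j, hj, hmem⟩ := cover hm hN hW hinj hdiag (r - ((m+1:ℕ) : ZMod N)) v
  have harith : r - ((m+1:ℕ) : ZMod N) + (j : ZMod N) = r - ((m+1-j : ℕ) : ZMod N) := by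
    rw [Nat.cast_sub (by omega : j ≤ m+1)]
    ring
  rw [harith] at hmem
  set δ := m + 1 - j with hδ
  rcases Nat.lt_or_ge δ m with h | h
  · have harith2 : r - ((δ:ℕ) : ZMod N) + ((δ:ℕ) : ZMod N) = r := by ring
    exact absurd (harith2 ▸ hW (r - ((δ:ℕ) : ZMod N)) δ (by omega) h v hmem) (by simp [hA])
  · rcases Nat.lt_or_ge δ (m+1) with h' | h'
    · left; have : δ = m := by omega
      rwa [this] at hmem
    · right; have : δ = m + 1 := by omega
      rwa [this] at hmem

theorem Qcard [NeZero N] (hinj : Function.Injective E) (hdiag : ∀ p, ¬ (E p).IsDiag)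
    (v : Fin (2*m+1)) :
    (Finset.univ.filter (fun p : ZMod N => v ∈ E p)).card ≤ 2*m := by
  classical
  have hmain : (Finset.univ.filter (fun p : ZMod N => v ∈ E p)).card
      ≤ (Finset.univ.erase v).card := by
    refine Finset.card_le_card_of_injOn
      (fun p => if h : v ∈ E p then Sym2.Mem.other' h else v) ?_ ?_
    · intro p hp
      rw [Finset.mem_coe, Finset.mem_filter] at hp
      dsimp only
      rw [dif_pos hp.2]
      exact Finset.mem_erase.mpr ⟨(partner_ne hdiag hp.2).symm, Finset.mem_univ _⟩
    · intro p₁ hp₁ p₂ hp₂ heq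
      rw [Finset.mem_coe, Finset.mem_filter] at hp₁ hp₂
      dsimp only at heq
      rw [dif_pos hp₁.2, dif_pos hp₂.2] at heq
      apply hinj
      rw [← Sym2.other_spec' hp₁.2, ← Sym2.other_spec' hp₂.2, heq]
  rwa [Finset.card_erase_of_mem (Finset.mem_univ v), Finset.card_univ, Fintype.card_fin,
    Nat.add_sub_cancel] at hmain

theorem wkO_zero {n : ℕ} (E : ZMod N → Sym2 (Fin n)) (v : Fin n) (q : ZMod N) :
    wkO m E v q 0 = 0 := rfl

theorem wkO_step {n : ℕ} (E : ZMod N → Sym2 (Fin n)) (v : Fin n) (q : ZMod N) (k : ℕ) :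
    (wkO m E v q (k+1) = wkO m E v q k + m ∧ v ∈ E (q + ((wkO m E v q k + m : ℕ) : ZMod N)))
    ∨ (wkO m E v q (k+1) = wkO m E v q k + (m+1)
        ∧ v ∉ E (q + ((wkO m E v q k + m : ℕ) : ZMod N))) := by
  rw [wkO]
  by_cases h : v ∈ E (q + ((wkO m E v q k + m : ℕ) : ZMod N))
  · left; exact ⟨by rw [if_pos h], h⟩
  · right; exact ⟨by rw [if_neg h], h⟩

theorem wkO_step_if {n : ℕ} (E : ZMod N → Sym2 (Fin n)) (v : Fin n) (q : ZMod N) (k : ℕ)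
    (h : v ∈ E (q + ((wkO m E v q k + m : ℕ) : ZMod N))) :
    wkO m E v q (k+1) = wkO m E v q k + m := by
  rcases wkO_step E v q k with ⟨h1, _⟩ | ⟨_, h2⟩
  · exact h1
  · exact absurd h h2

theorem wkO_mono {n : ℕ} (hm : 1 ≤ m) (E : ZMod N → Sym2 (Fin n)) (v : Fin n) (q : ZMod N) :
    StrictMono (wkO m E v q) := by
  apply strictMono_nat_of_lt_succ
  intro k
  rcases wkO_step (m := m) E v q k with ⟨h1, _⟩ | ⟨h1, _⟩ <;> omega

theorem wkO_lb {n : ℕ} (E : ZMod N → Sym2 (Fin n)) (v : Fin n) (q : ZMod N) (k : ℕ) :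
    k * m ≤ wkO m E v q k := by
  induction k with
  | zero => simp [wkO_zero]
  | succ k ih =>
    rcases wkO_step (m := m) E v q k with ⟨h1, _⟩ | ⟨h1, _⟩ <;> rw [h1] <;> nlinarith

theorem wkO_ub {n : ℕ} (E : ZMod N → Sym2 (Fin n)) (v : Fin n) (q : ZMod N) (k : ℕ) :
    wkO m E v q k ≤ k * (m+1) := by
  induction k with
  | zero => simp [wkO_zero]
  | succ k ih =>
    rcases wkO_step (m := m) E v q k with ⟨h1, _⟩ | ⟨h1, _⟩ <;> rw [h1] <;> nlinarith

theorem wkO_mem (hm : 2 ≤ m) (hN : N = 2*m^2 + m)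
    (hW : ∀ (p : ZMod N) (δ : ℕ), 0 < δ → δ < m → ∀ x : Fin (2*m+1), x ∈ E p → x ∉ E (p + (δ : ZMod N)))
    (hinj : Function.Injective E) (hdiag : ∀ p, ¬ (E p).IsDiag)
    {v : Fin (2*m+1)} {q : ZMod N} (hq : v ∈ E q) (k : ℕ) :
    v ∈ E (q + ((wkO m E v q k : ℕ) : ZMod N)) := by
  induction k with
  | zero => simpa [wkO_zero] using hq
  | succ k ih =>
    rcases wkO_step (m := m) E v q k with ⟨h1, h2⟩ | ⟨h1, h2⟩
    · rwa [h1]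
    · rcases nxt hm hN hW hinj hdiag ih with h | h
      · exact absurd (by
          have harith : q + ((wkO m E v q k : ℕ) : ZMod N) + ((m:ℕ) : ZMod N)
              = q + ((wkO m E v q k + m : ℕ) : ZMod N) := by push_cast; ring
          rwa [harith] at h) h2
      · have harith : q + ((wkO m E v q k : ℕ) : ZMod N) + ((m+1:ℕ) : ZMod N)
            = q + ((wkO m E v q k + (m+1) : ℕ) : ZMod N) := by push_cast; ring
        rw [h1]
        rwa [harith] at h

theorem wkO_noskip (hm : 2 ≤ m) (hN : N = 2*m^2 + m)
    (hW : ∀ (p : ZMod N) (δ : ℕ), 0 < δ → δ < m → ∀ x : Fin (2*m+1), x ∈ E p → x ∉ E (p + (δ : ZMod N)))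
    (hinj : Function.Injective E) (hdiag : ∀ p, ¬ (E p).IsDiag)
    {v : Fin (2*m+1)} {q : ZMod N} (hq : v ∈ E q) (k : ℕ) {r : ℕ}
    (h1 : wkO m E v q k < r) (h2 : r < wkO m E v q (k+1)) :
    v ∉ E (q + (r : ZMod N)) := by
  intro hmem
  set o := wkO m E v q k with ho
  have hub : r ≤ o + m := by
    rcases wkO_step (m := m) E v q k with ⟨h3, _⟩ | ⟨h3, _⟩ <;> omega
  rcases Nat.lt_or_ge r (o + m) with h | h
  · -- distance r - o ∈ [1, m-1] from q + o
    have harith : q + ((o : ℕ) : ZMod N) + ((r - o : ℕ) : ZMod N) = q + (r : ZMod N) := by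
      rw [add_assoc, ← Nat.cast_add]
      congr 2
      omega
    exact hW (q + ((o : ℕ) : ZMod N)) (r - o) (by omega) (by omega) v
      (wkO_mem hm hN hW hinj hdiag hq k) (harith ▸ hmem)
  · -- r = o + m : the step would have been m
    have hr : r = o + m := by omega
    have := wkO_step_if (m := m) E v q k (by rwa [← hr])
    omega

theorem wkO_visits (hm : 2 ≤ m) (hN : N = 2*m^2 + m)
    (hW : ∀ (p : ZMod N) (δ : ℕ), 0 < δ → δ < m → ∀ x : Fin (2*m+1), x ∈ E p → x ∉ E (p + (δ : ZMod N)))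
    (hinj : Function.Injective E) (hdiag : ∀ p, ¬ (E p).IsDiag)
    {v : Fin (2*m+1)} {q : ZMod N} (hq : v ∈ E q) (K : ℕ) {r : ℕ}
    (hmem : v ∈ E (q + (r : ZMod N))) (hr : r < wkO m E v q K) :
    ∃ k, k < K ∧ wkO m E v q k = r := by
  induction K with
  | zero => simp [wkO_zero] at hr
  | succ K ih =>
    rcases Nat.lt_or_ge r (wkO m E v q K) with h | h
    · obtain ⟨k, hk, hk2⟩ := ih h
      exact ⟨k, by omega, hk2⟩
    · rcases Nat.lt_or_ge (wkO m E v q K) r with h' | h'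
      · exact absurd hmem (wkO_noskip hm hN hW hinj hdiag hq K h' hr)
      · exact ⟨K, by omega, by omega⟩

theorem wkO_2m (hm : 2 ≤ m) (hN : N = 2*m^2 + m)
    (hW : ∀ (p : ZMod N) (δ : ℕ), 0 < δ → δ < m → ∀ x : Fin (2*m+1), x ∈ E p → x ∉ E (p + (δ : ZMod N)))
    (hinj : Function.Injective E) (hdiag : ∀ p, ¬ (E p).IsDiag)
    {v : Fin (2*m+1)} {q : ZMod N} (hq : v ∈ E q) :
    wkO m E v q (2*m) = N := by
  haveI : NeZero N := ⟨by omega⟩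
  -- N is "hit" by the walk
  have hmemN : v ∈ E (q + ((N : ℕ) : ZMod N)) := by
    rwa [ZMod.natCast_self, add_zero]
  have hhit : ∃ k, k ≤ 2*m+1 ∧ wkO m E v q k = N := by
    have hlb := wkO_lb (m := m) E v q (2*m+1)
    rcases Nat.lt_or_ge N (wkO m E v q (2*m+1)) with h | h
    · obtain ⟨k, hk, hk2⟩ := wkO_visits hm hN hW hinj hdiag hq (2*m+1) hmemN h
      exact ⟨k, by omega, hk2⟩
    · exact ⟨2*m+1, le_refl _, by nlinarith⟩
  obtain ⟨k, hk, hkN⟩ := hhit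
  have hub := wkO_ub (m := m) E v q k
  have hklb : 2*m ≤ k := by nlinarith
  -- rule out k = 2m+1 via the cardinality bound
  rcases Nat.lt_or_ge k (2*m+1) with h | h
  · have hk2m : k = 2*m := by omega
    exact hk2m ▸ hkN
  · exfalso
    have hk1 : k = 2*m+1 := by omega
    classical
    have hsub : (Finset.range (2*m+1)).image (fun i => q + ((wkO m E v q i : ℕ) : ZMod N))
        ⊆ Finset.univ.filter (fun p : ZMod N => v ∈ E p) := by
      intro x hx
      rw [Finset.mem_image] at hx
      obtain ⟨i, hi, rfl⟩ := hx
      exact Finset.mem_filter.mpr ⟨Finset.mem_univ _, wkO_mem hm hN hW hinj hdiag hq i⟩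
    have hcard : ((Finset.range (2*m+1)).image
        (fun i => q + ((wkO m E v q i : ℕ) : ZMod N))).card = 2*m+1 := by
      rw [Finset.card_image_of_injOn, Finset.card_range]
      intro i hi j hj heq
      rw [Finset.mem_coe, Finset.mem_range] at hi hj
      have hilt : wkO m E v q i < N := by
        have := wkO_mono (m := m) (by omega) E v q (show i < k by omega)
        omega
      have hjlt : wkO m E v q j < N := by
        have := wkO_mono (m := m) (by omega) E v q (show j < k by omega)
        omega
      have hcast : ((wkO m E v q i : ℕ) : ZMod N) = ((wkO m E v q j : ℕ) : ZMod N) :=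
        by exact add_left_cancel heq
      have := castInjNat hm hN hilt hjlt hcast
      exact (wkO_mono (m := m) (by omega) E v q).injective this
    have hle := Finset.card_le_card hsub
    have := Qcard (N := N) hinj hdiag v
    omega

/-- No vertex occurs at three positions `p, p+m, p+2m`. -/
theorem noMM (hm : 2 ≤ m) (hN : N = 2*m^2 + m)
    (hW : ∀ (p : ZMod N) (δ : ℕ), 0 < δ → δ < m → ∀ x : Fin (2*m+1), x ∈ E p → x ∉ E (p + (δ : ZMod N)))
    (hinj : Function.Injective E) (hdiag : ∀ p, ¬ (E p).IsDiag)
    {v : Fin (2*m+1)} {p : ZMod N}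
    (hv0 : v ∈ E p) (hv1 : v ∈ E (p + ((m:ℕ) : ZMod N)))
    (hv2 : v ∈ E (p + ((2*m:ℕ) : ZMod N))) : False := by
  classical
  haveI : NeZero N := ⟨by omega⟩
  have hmN : m < N := by nlinarith
  have hm1N : m + 1 < N := by nlinarith
  set q : ZMod N := p + ((m:ℕ) : ZMod N) with hqdef
  have hq : v ∈ E q := hv1
  have hqm : v ∈ E (q + ((m:ℕ) : ZMod N)) := by
    have : q + ((m:ℕ) : ZMod N) = p + ((2*m:ℕ) : ZMod N) := by
      rw [hqdef, add_assoc, ← Nat.cast_add]; congr 2; omega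
    rwa [this]
  have hqmm : v ∈ E (q - ((m:ℕ) : ZMod N)) := by
    have : q - ((m:ℕ) : ZMod N) = p := by rw [hqdef]; ring
    rwa [this]
  have hmne : ((m:ℕ) : ZMod N) ≠ 0 := castNeZero hm hN (by omega) hmN
  have hm1ne : ((m+1:ℕ) : ZMod N) ≠ 0 := castNeZero hm hN (by omega) hm1N
  set w := Sym2.Mem.other' hq with hwdef
  have hw : w ∈ E q := Sym2.other_mem' hq
  have hvw : v ≠ w := partner_ne hdiag hq
  -- `w` is not at `q ± m`
  have hwqm : w ∉ E (q + ((m:ℕ) : ZMod N)) := by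
    intro hmem
    have heq : E (q + ((m:ℕ) : ZMod N)) = E q := pairEq hvw hqm hmem hq hw
    have := hinj heq
    exact hmne (by
      have h' := congrArg (fun z => z - q) this
      simpa [add_comm, add_sub_cancel_right] using h')
  have hwqmm : w ∉ E (q - ((m:ℕ) : ZMod N)) := by
    intro hmem
    have heq : E (q - ((m:ℕ) : ZMod N)) = E q := pairEq hvw hqmm hmem hq hw
    have := hinj heq
    apply hmne
    have h' := congrArg (fun z => q - z) this
    simpa [sub_sub_cancel] using h'
  -- w occurs at q - (m+1)
  have hwprev : w ∈ E (q - ((m+1:ℕ) : ZMod N)) := by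
    rcases prev hm hN hW hinj hdiag hw with h | h
    · exact absurd h hwqmm
    · exact h
  -- first steps
  have hov1 : wkO m E v q 1 = m := by
    have hc : ((wkO m E v q 0 + m : ℕ) : ZMod N) = ((m:ℕ) : ZMod N) := by
      rw [wkO_zero, Nat.zero_add]
    have h := wkO_step_if (m := m) E v q 0 (by rw [hc]; exact hqm)
    rw [wkO_zero] at h
    simpa using h
  have how1 : wkO m E w q 1 = m + 1 := by
    rcases wkO_step (m := m) E w q 0 with ⟨h1, h2⟩ | ⟨h1, h2⟩
    · exfalso
      apply hwqm
      have hc : ((wkO m E w q 0 + m : ℕ) : ZMod N) = ((m:ℕ) : ZMod N) := by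
        rw [wkO_zero, Nat.zero_add]
      rwa [hc] at h2
    · rw [wkO_zero] at h1
      simpa using h1
  -- endpoints
  have hov2m : wkO m E v q (2*m) = N := wkO_2m hm hN hW hinj hdiag hq
  have how2m : wkO m E w q (2*m) = N := wkO_2m hm hN hW hinj hdiag hw
  have hcastNm : ((N - m : ℕ) : ZMod N) = - ((m:ℕ) : ZMod N) := by
    rw [Nat.cast_sub (by omega), ZMod.natCast_self, zero_sub]
  have hcastNm1 : ((N - (m+1) : ℕ) : ZMod N) = - ((m+1:ℕ) : ZMod N) := by
    rw [Nat.cast_sub (by omega), ZMod.natCast_self, zero_sub]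
  -- penultimate positions
  have hov_pen : wkO m E v q (2*m-1) = N - m := by
    have hstep := wkO_step (m := m) E v q (2*m-1)
    have h2m : 2*m-1+1 = 2*m := by omega
    rw [h2m, hov2m] at hstep
    rcases hstep with ⟨h1, _⟩ | ⟨h1, h2⟩
    · omega
    · exfalso
      -- wkO (2m-1) = N - m - 1, but then v sits at distance 1 before q - m
      have hval : wkO m E v q (2*m-1) = N - (m+1) := by omega
      have hmem := wkO_mem hm hN hW hinj hdiag hq (2*m-1)
      rw [hval, hcastNm1] at hmem
      have harith : (q + -((m+1:ℕ) : ZMod N)) + ((1:ℕ) : ZMod N) = q - ((m:ℕ) : ZMod N) := by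
        push_cast
        ring
      exact hW _ 1 (by omega) (by omega) v hmem (harith ▸ hqmm)
  have how_pen : wkO m E w q (2*m-1) = N - (m+1) := by
    have hstep := wkO_step (m := m) E w q (2*m-1)
    have h2m : 2*m-1+1 = 2*m := by omega
    rw [h2m, how2m] at hstep
    rcases hstep with ⟨h1, _⟩ | ⟨h1, h2⟩
    · exfalso
      have hval : wkO m E w q (2*m-1) = N - m := by omega
      have hmem := wkO_mem hm hN hW hinj hdiag hw (2*m-1)
      rw [hval, hcastNm] at hmem
      exact hwqmm (by rwa [sub_eq_add_neg])
    · omega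
  -- the discrete IVT
  set dgap : ℕ → ℤ := fun k => (wkO m E w q k : ℤ) - (wkO m E v q k : ℤ) with hdgap
  have hd1 : dgap 1 = 1 := by simp [hdgap, hov1, how1]
  have hdpen : dgap (2*m-1) = -1 := by
    simp only [hdgap, hov_pen, how_pen]
    omega
  have hdstep : ∀ k, dgap k - 1 ≤ dgap (k+1) := by
    intro k
    rcases wkO_step (m := m) E v q k with ⟨h1, _⟩ | ⟨h1, _⟩ <;>
      rcases wkO_step (m := m) E w q k with ⟨h2, _⟩ | ⟨h2, _⟩ <;>
      simp only [hdgap] <;> omega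
  have hex : ∃ k, 1 ≤ k ∧ k ≤ 2*m-1 ∧ dgap k ≤ 0 := ⟨2*m-1, by omega, le_refl _, by omega⟩
  have hPex : ∃ k, 1 ≤ k ∧ k ≤ 2*m-1 ∧ dgap k ≤ 0 := hex
  have hspec := Nat.find_spec hPex
  have hminlt : ∀ j, j < Nat.find hPex → ¬(1 ≤ j ∧ j ≤ 2*m-1 ∧ dgap j ≤ 0) :=
    fun j hj => Nat.find_min hPex hj
  set k₀ := Nat.find hPex with hk₀
  obtain ⟨hk1, hk2, hk3⟩ := hspec
  have hk₀ne1 : k₀ ≠ 1 := by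
    intro h
    rw [h] at hk3
    omega
  have hprev_pos : 1 ≤ dgap (k₀ - 1) := by
    have hmin := hminlt (k₀ - 1) (by omega)
    push_neg at hmin
    have := hmin (by omega) (by omega)
    omega
  have hd0 : dgap k₀ = 0 := by
    have := hdstep (k₀ - 1)
    have hkk : k₀ - 1 + 1 = k₀ := by omega
    rw [hkk] at this
    omega
  -- so the two walks meet strictly inside the cycle
  set r := wkO m E v q k₀ with hr
  have hreq : wkO m E w q k₀ = r := by
    simp only [hdgap] at hd0
    omega
  have hrlb : m ≤ r := by
    have := (wkO_mono (m := m) (by omega) E v q).le_iff_le.mpr (show 1 ≤ k₀ by omega)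
    rw [hov1] at this
    exact this
  have hrub : r ≤ N - m := by
    have := (wkO_mono (m := m) (by omega) E v q).le_iff_le.mpr hk2
    rw [hov_pen] at this
    exact this
  have hvmem := wkO_mem hm hN hW hinj hdiag hq k₀
  have hwmem := wkO_mem hm hN hW hinj hdiag hw k₀
  rw [hreq] at hwmem
  have heq : E (q + ((r:ℕ) : ZMod N)) = E q := pairEq hvw hvmem hwmem hq hw
  have := hinj heq
  have hr0 : ((r:ℕ) : ZMod N) = 0 := by
    have h' := congrArg (fun z => z - q) this
    simpa [add_comm, add_sub_cancel_right] using h'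
  exact castNeZero hm hN (by omega) (by omega) hr0

theorem noM1M1 (hm : 2 ≤ m) (hN : N = 2*m^2 + m)
    (hW : ∀ (p : ZMod N) (δ : ℕ), 0 < δ → δ < m → ∀ x : Fin (2*m+1), x ∈ E p → x ∉ E (p + (δ : ZMod N)))
    (hinj : Function.Injective E) (hdiag : ∀ p, ¬ (E p).IsDiag)
    {v : Fin (2*m+1)} {r₀ : ZMod N}
    (hv0 : v ∈ E r₀) (hv1 : v ∈ E (r₀ + ((m+1:ℕ) : ZMod N)))
    (hv2 : v ∈ E (r₀ + ((2*m+2:ℕ) : ZMod N))) : False := by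
  haveI : NeZero N := ⟨by omega⟩
  have hm1N : m + 1 < N := by nlinarith
  have hm1ne : ((m+1:ℕ) : ZMod N) ≠ 0 := castNeZero hm hN (by omega) hm1N
  set s : ZMod N := r₀ + ((m+1:ℕ) : ZMod N) with hsdef
  have hs : v ∈ E s := hv1
  set w := Sym2.Mem.other' hs with hwdef
  have hw : w ∈ E s := Sym2.other_mem' hs
  have hvw : v ≠ w := partner_ne hdiag hs
  have hsub : s - ((m+1:ℕ) : ZMod N) = r₀ := by rw [hsdef]; ring
  have hadd : s + ((m+1:ℕ) : ZMod N) = r₀ + ((2*m+2:ℕ) : ZMod N) := by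
    rw [hsdef, add_assoc, ← Nat.cast_add]
    congr 2
    omega
  -- w ∈ E (s - m)
  have hwprev : w ∈ E (s - ((m:ℕ) : ZMod N)) := by
    rcases prev hm hN hW hinj hdiag hw with h | h
    · exact h
    · exfalso
      rw [hsub] at h
      have heq : E r₀ = E s := pairEq hvw hv0 h hs hw
      have := hinj heq
      apply hm1ne
      have h' := congrArg (fun z => z - r₀) this.symm
      simpa [hsdef, add_comm, add_sub_cancel_right] using h'
  -- w ∈ E (s + m)
  have hwnxt : w ∈ E (s + ((m:ℕ) : ZMod N)) := by
    rcases nxt hm hN hW hinj hdiag hw with h | h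
    · exact h
    · exfalso
      rw [hadd] at h
      have heq : E (r₀ + ((2*m+2:ℕ) : ZMod N)) = E s := pairEq hvw hv2 h hs hw
      have := hinj heq
      apply hm1ne
      have h' := congrArg (fun z => z - s) this
      rw [← hadd] at h'
      simpa [add_comm, add_sub_cancel_right] using h'
  -- now w is at (s-m), s, (s+m): contradiction with noMM
  apply noMM hm hN hW hinj hdiag (p := s - ((m:ℕ) : ZMod N)) hwprev
  · have : s - ((m:ℕ) : ZMod N) + ((m:ℕ) : ZMod N) = s := by ring
    rwa [this]
  · have : s - ((m:ℕ) : ZMod N) + ((2*m:ℕ) : ZMod N) = s + ((m:ℕ) : ZMod N) := by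
      push_cast
      ring
    rwa [this]

theorem out_step (hm : 2 ≤ m) (hN : N = 2*m^2 + m)
    (hW : ∀ (p : ZMod N) (δ : ℕ), 0 < δ → δ < m → ∀ x : Fin (2*m+1), x ∈ E p → x ∉ E (p + (δ : ZMod N)))
    (hinj : Function.Injective E) (hdiag : ∀ p, ¬ (E p).IsDiag)
    {v : Fin (2*m+1)} {r : ZMod N}
    (hv : v ∈ E r) (hvm : v ∈ E (r + ((m:ℕ) : ZMod N))) :
    v ∈ E (r + ((2*m+1:ℕ) : ZMod N)) ∧
      v ∈ E ((r + ((2*m+1:ℕ) : ZMod N)) + ((m:ℕ) : ZMod N)) := by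
  have h3 : v ∈ E (r + ((2*m+1:ℕ) : ZMod N)) := by
    rcases nxt hm hN hW hinj hdiag hvm with h | h
    · exfalso
      apply noMM hm hN hW hinj hdiag hv hvm
      have : r + ((m:ℕ) : ZMod N) + ((m:ℕ) : ZMod N) = r + ((2*m:ℕ) : ZMod N) := by
        push_cast; ring
      rwa [this] at h
    · have : r + ((m:ℕ) : ZMod N) + ((m+1:ℕ) : ZMod N) = r + ((2*m+1:ℕ) : ZMod N) := by
        push_cast; ring
      rwa [this] at h
  refine ⟨h3, ?_⟩
  rcases nxt hm hN hW hinj hdiag h3 with h | h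
  · rwa [add_assoc, ← Nat.cast_add] at h ⊢
  · exfalso
    apply noM1M1 hm hN hW hinj hdiag hvm
    · have : r + ((m:ℕ) : ZMod N) + ((m+1:ℕ) : ZMod N) = r + ((2*m+1:ℕ) : ZMod N) := by
        push_cast; ring
      rwa [this]
    · have : r + ((m:ℕ) : ZMod N) + ((2*m+2:ℕ) : ZMod N)
          = r + ((2*m+1:ℕ) : ZMod N) + ((m+1:ℕ) : ZMod N) := by
        push_cast; ring
      rwa [← this] at h

theorem out_iter (hm : 2 ≤ m) (hN : N = 2*m^2 + m)
    (hW : ∀ (p : ZMod N) (δ : ℕ), 0 < δ → δ < m → ∀ x : Fin (2*m+1), x ∈ E p → x ∉ E (p + (δ : ZMod N)))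
    (hinj : Function.Injective E) (hdiag : ∀ p, ¬ (E p).IsDiag)
    {v : Fin (2*m+1)} {r : ZMod N}
    (hv : v ∈ E r) (hvm : v ∈ E (r + ((m:ℕ) : ZMod N))) (k : ℕ) :
    v ∈ E (r + ((k*(2*m+1) : ℕ) : ZMod N)) ∧
      v ∈ E (r + ((k*(2*m+1) : ℕ) : ZMod N) + ((m:ℕ) : ZMod N)) := by
  induction k with
  | zero => simpa using ⟨hv, hvm⟩
  | succ k ih =>
    have hstep := out_step hm hN hW hinj hdiag ih.1 ih.2
    have harith : r + ((k*(2*m+1) : ℕ) : ZMod N) + ((2*m+1:ℕ) : ZMod N)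
        = r + (((k+1)*(2*m+1) : ℕ) : ZMod N) := by
      rw [add_assoc, ← Nat.cast_add]
      congr 2
      ring
    rw [harith] at hstep
    exact hstep

theorem exists_outM (hm : 2 ≤ m) (hN : N = 2*m^2 + m)
    (hW : ∀ (p : ZMod N) (δ : ℕ), 0 < δ → δ < m → ∀ x : Fin (2*m+1), x ∈ E p → x ∉ E (p + (δ : ZMod N)))
    (hinj : Function.Injective E) (hdiag : ∀ p, ¬ (E p).IsDiag)
    (hsurj : ∀ v w : Fin (2*m+1), v ≠ w → ∃ p, E p = s(v, w))
    (v : Fin (2*m+1)) :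
    ∃ r : ZMod N, v ∈ E r ∧ v ∈ E (r + ((m:ℕ) : ZMod N)) := by
  -- v occurs somewhere
  have hne : ∃ w : Fin (2*m+1), v ≠ w := by
    haveI : Nontrivial (Fin (2*m+1)) :=
      ⟨⟨⟨0, by omega⟩, ⟨1, by omega⟩, by simp [Fin.ext_iff]⟩⟩
    obtain ⟨w, hw⟩ := exists_ne v
    exact ⟨w, hw.symm⟩
  obtain ⟨w, hvw⟩ := hne
  obtain ⟨p, hp⟩ := hsurj v w hvw
  have hv : v ∈ E p := by rw [hp]; exact Sym2.mem_mk_left v w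
  rcases nxt hm hN hW hinj hdiag hv with h | h
  · exact ⟨p, hv, h⟩
  · rcases nxt hm hN hW hinj hdiag h with h2 | h2
    · exact ⟨p + ((m+1:ℕ) : ZMod N), h, h2⟩
    · exfalso
      apply noM1M1 hm hN hW hinj hdiag hv h
      have : p + ((m+1:ℕ) : ZMod N) + ((m+1:ℕ) : ZMod N) = p + ((2*m+2:ℕ) : ZMod N) := by
        push_cast; ring
      rwa [this] at h2

/-- every occurrence of `v` is at `r + k(2m+1)` or `r + m + k(2m+1)` where `(r, r+m)`
is a pair of consecutive occurrences of `v`. -/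
theorem occChar (hm : 2 ≤ m) (hN : N = 2*m^2 + m)
    (hW : ∀ (p : ZMod N) (δ : ℕ), 0 < δ → δ < m → ∀ x : Fin (2*m+1), x ∈ E p → x ∉ E (p + (δ : ZMod N)))
    (hinj : Function.Injective E) (hdiag : ∀ p, ¬ (E p).IsDiag)
    {v : Fin (2*m+1)} {r : ZMod N}
    (hv : v ∈ E r) (hvm : v ∈ E (r + ((m:ℕ) : ZMod N)))
    {s : ZMod N} (hs : v ∈ E s) :
    ∃ k : ℕ, k < m ∧
      (s = r + ((k*(2*m+1) : ℕ) : ZMod N) ∨ s = r + ((m + k*(2*m+1) : ℕ) : ZMod N)) := by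
  classical
  haveI : NeZero N := ⟨by omega⟩
  set Fs : Finset (ZMod N) := (Finset.range m).biUnion
    (fun k => {r + ((k*(2*m+1) : ℕ) : ZMod N), r + ((m + k*(2*m+1) : ℕ) : ZMod N)}) with hFs
  have hmemFs : ∀ x, x ∈ Fs ↔ ∃ k : ℕ, k < m ∧
      (x = r + ((k*(2*m+1) : ℕ) : ZMod N) ∨ x = r + ((m + k*(2*m+1) : ℕ) : ZMod N)) := by
    intro x
    simp only [hFs, Finset.mem_biUnion, Finset.mem_range, Finset.mem_insert,
      Finset.mem_singleton]
  -- Fs ⊆ occurrences of v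
  have hFsub : Fs ⊆ Finset.univ.filter (fun p : ZMod N => v ∈ E p) := by
    intro x hx
    rw [hmemFs] at hx
    obtain ⟨k, hk, hcase⟩ := hx
    have hit := out_iter hm hN hW hinj hdiag hv hvm k
    rcases hcase with rfl | rfl
    · exact Finset.mem_filter.mpr ⟨Finset.mem_univ _, hit.1⟩
    · refine Finset.mem_filter.mpr ⟨Finset.mem_univ _, ?_⟩
      have : r + ((k*(2*m+1) : ℕ) : ZMod N) + ((m:ℕ) : ZMod N)
          = r + ((m + k*(2*m+1) : ℕ) : ZMod N) := by
        rw [add_assoc, ← Nat.cast_add]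
        congr 2
        omega
      rw [← this]
      exact hit.2
  -- all the listed positions are distinct
  have hbound1 : ∀ k : ℕ, k < m → k*(2*m+1) < N := by
    intro k hk; nlinarith
  have hbound2 : ∀ k : ℕ, k < m → m + k*(2*m+1) < N := by
    intro k hk; nlinarith
  have hcard : Fs.card = 2*m := by
    rw [hFs, Finset.card_biUnion]
    · have : ∀ k ∈ Finset.range m,
          ({r + ((k*(2*m+1) : ℕ) : ZMod N), r + ((m + k*(2*m+1) : ℕ) : ZMod N)} :
            Finset (ZMod N)).card = 2 := by
        intro k hk
        rw [Finset.mem_range] at hk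
        rw [Finset.card_insert_of_notMem, Finset.card_singleton]
        rw [Finset.mem_singleton]
        intro heq
        have hc : ((k*(2*m+1) : ℕ) : ZMod N) = ((m + k*(2*m+1) : ℕ) : ZMod N) :=
          add_left_cancel heq
        have := castInjNat hm hN (hbound1 k hk) (hbound2 k hk) hc
        omega
      rw [Finset.sum_congr rfl this, Finset.sum_const, Finset.card_range, smul_eq_mul]
      ring
    · intro i hi j hj hij
      rw [Finset.mem_coe, Finset.mem_range] at hi hj
      simp only [Function.onFun]
      rw [Finset.disjoint_left]
      intro x hxi hxj
      rw [Finset.mem_insert, Finset.mem_singleton] at hxi hxj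
      have key : ∀ a b : ℕ, a < N → b < N → r + ((a:ℕ) : ZMod N) = r + ((b:ℕ) : ZMod N)
          → a = b := by
        intro a b ha hb heq
        exact castInjNat hm hN ha hb (add_left_cancel heq)
      apply hij
      rcases hxi with rfl | rfl <;> rcases hxj with heq | heq
      · have := key _ _ (hbound1 i hi) (hbound1 j hj) heq
        exact Nat.eq_of_mul_eq_mul_right (by omega) this
      · exfalso
        have := key _ _ (hbound1 i hi) (hbound2 j hj) heq
        rcases le_or_gt i j with h | h
        · nlinarith
        · nlinarith
      · exfalso
        have := key _ _ (hbound2 i hi) (hbound1 j hj) heq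
        rcases le_or_gt j i with h | h
        · nlinarith
        · nlinarith
      · have := key _ _ (hbound2 i hi) (hbound2 j hj) heq
        have h2 : i * (2*m+1) = j * (2*m+1) := by omega
        exact Nat.eq_of_mul_eq_mul_right (by omega) h2
  -- conclude : the occurrence set equals Fs
  have hQle := Qcard (N := N) hinj hdiag v
  have hQeq : Finset.univ.filter (fun p : ZMod N => v ∈ E p) = Fs :=
    (Finset.eq_of_subset_of_card_le hFsub (by omega)).symm
  have hsmem : s ∈ Fs := by
    rw [← hQeq]
    exact Finset.mem_filter.mpr ⟨Finset.mem_univ _, hs⟩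
  rwa [hmemFs] at hsmem

theorem pigeon (m : ℕ) (hm : 2 ≤ m) (φ : Fin (2*m+1) → ZMod (2*m+1))
    (hmz : ((m:ℕ) : ZMod (2*m+1)) ≠ 0)
    (key : ∀ v w : Fin (2*m+1), v ≠ w →
      φ v = φ w + ((m:ℕ) : ZMod (2*m+1)) ∨ φ w = φ v + ((m:ℕ) : ZMod (2*m+1))) : False := by
  have hcontra2 : ∀ x y : Fin (2*m+1), x ≠ y → φ x = φ y → False := by
    intro x y hxy heq
    rcases key x y hxy with h | h
    · rw [heq] at h
      exact hmz (by simpa [left_eq_add] using h)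
    · rw [heq] at h
      exact hmz (by simpa [left_eq_add] using h)
  set a : Fin (2*m+1) := ⟨0, by omega⟩ with ha
  set b : Fin (2*m+1) := ⟨1, by omega⟩ with hb
  set c : Fin (2*m+1) := ⟨2, by omega⟩ with hc
  set d : Fin (2*m+1) := ⟨3, by omega⟩ with hd
  have hab : a ≠ b := by simp [ha, hb, Fin.ext_iff]
  have hac : a ≠ c := by simp [ha, hc, Fin.ext_iff]
  have had : a ≠ d := by simp [ha, hd, Fin.ext_iff]
  have hbc : b ≠ c := by simp [hb, hc, Fin.ext_iff]
  have hbd : b ≠ d := by simp [hb, hd, Fin.ext_iff]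
  have hcd : c ≠ d := by simp [hc, hd, Fin.ext_iff]
  rcases key a b hab with h1 | h1 <;> rcases key a c hac with h2 | h2 <;>
    rcases key a d had with h3 | h3
  · exact hcontra2 b c hbc (add_right_cancel (h1.symm.trans h2))
  · exact hcontra2 b c hbc (add_right_cancel (h1.symm.trans h2))
  · exact hcontra2 b d hbd (add_right_cancel (h1.symm.trans h3))
  · exact hcontra2 c d hcd (h2.trans h3.symm)
  · exact hcontra2 c d hcd (add_right_cancel (h2.symm.trans h3))
  · exact hcontra2 b d hbd (h1.trans h3.symm)
  · exact hcontra2 b c hbc (h1.trans h2.symm)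
  · exact hcontra2 b c hbc (h1.trans h2.symm)

set_option maxHeartbeats 1600000 in
/-- The main contradiction: there is no such edge-labelling `E`. -/
theorem main_contra (hm : 2 ≤ m) (hN : N = 2*m^2 + m)
    (hW : ∀ (p : ZMod N) (δ : ℕ), 0 < δ → δ < m → ∀ x : Fin (2*m+1), x ∈ E p → x ∉ E (p + (δ : ZMod N)))
    (hinj : Function.Injective E) (hdiag : ∀ p, ¬ (E p).IsDiag)
    (hsurj : ∀ v w : Fin (2*m+1), v ≠ w → ∃ p, E p = s(v, w)) : False := by
  classical
  haveI : NeZero N := ⟨by omega⟩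
  -- choose a "base occurrence" for each vertex
  have hex := exists_outM hm hN hW hinj hdiag hsurj
  choose ρ hρ1 hρ2 using hex
  -- reduction mod (2m+1)
  have hdvd : (2*m+1) ∣ N := ⟨m, by rw [hN]; ring⟩
  set μ : ZMod N →+* ZMod (2*m+1) := ZMod.castHom hdvd (ZMod (2*m+1)) with hμ
  have hμk : ∀ k : ℕ, μ ((k*(2*m+1) : ℕ) : ZMod N) = 0 := by
    intro k
    rw [map_natCast, ZMod.natCast_eq_zero_iff]
    exact ⟨k, by ring⟩
  have hmz : ((m:ℕ) : ZMod (2*m+1)) ≠ 0 := by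
    rw [Ne, ZMod.natCast_eq_zero_iff]
    intro h
    have := Nat.le_of_dvd (by omega) h
    omega
  have hmzne : ((m:ℕ) : ZMod N) ≠ 0 := castNeZero hm hN (by omega) (by nlinarith)
  -- the key relation for each pair of distinct vertices
  have key : ∀ v w : Fin (2*m+1), v ≠ w →
      μ (ρ v) = μ (ρ w) + ((m:ℕ) : ZMod (2*m+1)) ∨
      μ (ρ w) = μ (ρ v) + ((m:ℕ) : ZMod (2*m+1)) := by
    intro v w hvw
    obtain ⟨P, hP⟩ := hsurj v w hvw
    have hvP : v ∈ E P := by rw [hP]; exact Sym2.mem_mk_left v w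
    have hwP : w ∈ E P := by rw [hP]; exact Sym2.mem_mk_right v w
    obtain ⟨k, hk, hkc⟩ := occChar hm hN hW hinj hdiag (hρ1 v) (hρ2 v) hvP
    obtain ⟨l, hl, hlc⟩ := occChar hm hN hW hinj hdiag (hρ1 w) (hρ2 w) hwP
    rcases hkc with hkc | hkc <;> rcases hlc with hlc | hlc
    · -- both "left": both v and w also occur at P+m, contradiction
      exfalso
      have hvm : v ∈ E (P + ((m:ℕ) : ZMod N)) := by
        rw [hkc]
        exact (out_iter hm hN hW hinj hdiag (hρ1 v) (hρ2 v) k).2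
      have hwm : w ∈ E (P + ((m:ℕ) : ZMod N)) := by
        rw [hlc]
        exact (out_iter hm hN hW hinj hdiag (hρ1 w) (hρ2 w) l).2
      have heq : E (P + ((m:ℕ) : ZMod N)) = E P := pairEq hvw hvm hwm hvP hwP
      have := hinj heq
      apply hmzne
      have h' := congrArg (fun z => z - P) this
      simpa [add_comm, add_sub_cancel_right] using h'
    · -- v left, w right : μ P = μ (ρ v) and μ P = μ (ρ w) + m
      left
      have h1 : μ P = μ (ρ v) := by
        rw [hkc, map_add, hμk, add_zero]
      have h2 : μ P = μ (ρ w) + ((m:ℕ) : ZMod (2*m+1)) := by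
        rw [hlc, map_add]
        have : ((m + l*(2*m+1) : ℕ) : ZMod N) = ((m:ℕ) : ZMod N) + ((l*(2*m+1) : ℕ) : ZMod N) := by
          push_cast; ring
        rw [this, map_add, hμk, add_zero, map_natCast]
      rw [← h1, h2]
    · -- v right, w left
      right
      have h1 : μ P = μ (ρ w) := by
        rw [hlc, map_add, hμk, add_zero]
      have h2 : μ P = μ (ρ v) + ((m:ℕ) : ZMod (2*m+1)) := by
        rw [hkc, map_add]
        have : ((m + k*(2*m+1) : ℕ) : ZMod N) = ((m:ℕ) : ZMod N) + ((k*(2*m+1) : ℕ) : ZMod N) := by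
          push_cast; ring
        rw [this, map_add, hμk, add_zero, map_natCast]
      rw [← h1, h2]
    · -- both "right": both v and w occur at P-m, contradiction
      exfalso
      have hvm : v ∈ E (P - ((m:ℕ) : ZMod N)) := by
        have harr : P - ((m:ℕ) : ZMod N) = ρ v + ((k*(2*m+1) : ℕ) : ZMod N) := by
          rw [hkc]
          have : ((m + k*(2*m+1) : ℕ) : ZMod N)
              = ((m:ℕ) : ZMod N) + ((k*(2*m+1) : ℕ) : ZMod N) := by push_cast; ring
          rw [this]
          ring
        rw [harr]
        exact (out_iter hm hN hW hinj hdiag (hρ1 v) (hρ2 v) k).1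
      have hwm : w ∈ E (P - ((m:ℕ) : ZMod N)) := by
        have harr : P - ((m:ℕ) : ZMod N) = ρ w + ((l*(2*m+1) : ℕ) : ZMod N) := by
          rw [hlc]
          have : ((m + l*(2*m+1) : ℕ) : ZMod N)
              = ((m:ℕ) : ZMod N) + ((l*(2*m+1) : ℕ) : ZMod N) := by push_cast; ring
          rw [this]
          ring
        rw [harr]
        exact (out_iter hm hN hW hinj hdiag (hρ1 w) (hρ2 w) l).1
      have heq : E (P - ((m:ℕ) : ZMod N)) = E P := pairEq hvw hvm hwm hvP hwP
      have := hinj heq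
      apply hmzne
      have h' := congrArg (fun z => P - z) this
      simpa [sub_sub_cancel] using h'
  exact pigeon m hm (fun v => μ (ρ v)) hmz key

end Aux

theorem no_good (m N : ℕ) (hm : 2 ≤ m) (hN : N = 2*m^2 + m)
    (f : ZMod N ≃ (⊤ : SimpleGraph (Fin (2*m+1))).edgeSet)
    (hf : CyclicGood (⊤ : SimpleGraph (Fin (2*m+1))) f m) : False := by
  set E : ZMod N → Sym2 (Fin (2*m+1)) := fun p => (f p : Sym2 (Fin (2*m+1))) with hE
  have hW : ∀ (p : ZMod N) (δ : ℕ), 0 < δ → δ < m →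
      ∀ x : Fin (2*m+1), x ∈ E p → x ∉ E (p + (δ : ZMod N)) := by
    intro p δ h1 h2 x hx
    have := hf p 0 δ (by omega) h2 (by omega)
    rw [Nat.cast_zero, add_zero] at this
    exact this x hx
  have hinj : Function.Injective E := by
    intro p q h
    exact f.injective (Subtype.ext h)
  have hdiag : ∀ p, ¬ (E p).IsDiag := by
    intro p
    exact SimpleGraph.not_isDiag_of_mem_edgeSet ⊤ (f p).2
  have hsurj : ∀ v w : Fin (2*m+1), v ≠ w → ∃ p, E p = s(v, w) := by
    intro v w hvw
    refine ⟨f.symm ⟨s(v, w), by rw [SimpleGraph.mem_edgeSet]; exact hvw⟩, ?_⟩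
    rw [hE]
    simp
  exact main_contra hm hN hW hinj hdiag hsurj

-- edge count of the complete graph on 2m+1 vertices
theorem edgeCount_top (m : ℕ) :
    Nat.card (⊤ : SimpleGraph (Fin (2*m+1))).edgeSet = 2*m^2 + m := by
  classical
  have h1 : Nat.card (⊤ : SimpleGraph (Fin (2*m+1))).edgeSet
      = (⊤ : SimpleGraph (Fin (2*m+1))).edgeFinset.card := by
    rw [Nat.card_eq_fintype_card, SimpleGraph.edgeFinset_card]
  rw [h1, SimpleGraph.card_edgeFinset_top_eq_card_choose_two, Fintype.card_fin]
  rw [Nat.choose_two_right]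
  have h2 : 2*m+1-1 = 2*m := by omega
  rw [h2]
  have h3 : (2*m+1) * (2*m) = (2*m^2+m)*2 := by ring
  omega


end CMSOddAux

/-- For every integer `m ≥ 2` there is no cyclic ordering of the
`2m² + m` edges of `K_{2m+1}` in which every `m` cyclically consecutive edges are
pairwise disjoint; consequently `cms (K_{2m+1}) ≤ m - 1`. -/

theorem cms_upper_bound_odd (m : ℕ) (hm : 2 ≤ m) :
    (¬ ∃ f : ZMod (2 * m ^ 2 + m) ≃ (⊤ : SimpleGraph (Fin (2 * m + 1))).edgeSet,
      CyclicGood (⊤ : SimpleGraph (Fin (2 * m + 1))) f m) ∧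
    cms (⊤ : SimpleGraph (Fin (2 * m + 1))) ≤ m - 1 := by
  constructor
  · rintro ⟨f, hf⟩
    exact CMSOddAux.no_good m (2 * m ^ 2 + m) hm rfl f hf
  · have hEC : edgeCount (⊤ : SimpleGraph (Fin (2 * m + 1))) = 2 * m ^ 2 + m :=
      CMSOddAux.edgeCount_top m
    rw [cms]
    apply csSup_le'
    intro d hd
    obtain ⟨f, hf⟩ := hd
    by_contra hdc
    push_neg at hdc
    have hmd : m ≤ d := by omega
    have hfm : CyclicGood (⊤ : SimpleGraph (Fin (2 * m + 1))) f m := by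
      intro i j k hj hk hne
      exact hf i j k (lt_of_lt_of_le hj hmd) (lt_of_lt_of_le hk hmd) hne
    exact CMSOddAux.no_good m (edgeCount (⊤ : SimpleGraph (Fin (2 * m + 1)))) hm hEC f hfm
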